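/- Fix a real m×m matrix A, an integer N ≥ 1, and real m×n matrices f_t and b_t for t = 1, …, N. Define E(A, B) = Σ_{t=1}^{N} ( ‖f_t − A b_t Bᵀ‖_F² + ‖b_t − A f_t Bᵀ‖_F² ), P = Σ_{t=1}^{N} [ (A b_t)ᵀ (A b_t) + (A f_t)ᵀ (A f_t) ] and Q = Σ_{t=1}^{N} [ b_tᵀ Aᵀ f_t + f_tᵀ Aᵀ b_t ]. If a real n×n matrix B* satisfies P (B*)ᵀ = Q, then E(A, B*) ≤ E(A, B) for every real n×n matrix B. In particular, if P is invertible, then (B*)ᵀ = P⁻¹ Q is (the transpose of) a global minimizer of B ↦ E(A, B). -/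
import Mathlib


open Matrix

/-- Frobenius norm of a real matrix. -/
noncomputable def frobNorm {p q : ℕ} (M : Matrix (Fin p) (Fin q) ℝ) : ℝ :=
  Real.sqrt (∑ i, ∑ j, M i j ^ 2)

/-- The Burg-type total prediction error `E(A, B)`. -/
noncomputable def burgE {m n N : ℕ} (f b : Fin N → Matrix (Fin m) (Fin n) ℝ)
    (A : Matrix (Fin m) (Fin m) ℝ) (B : Matrix (Fin n) (Fin n) ℝ) : ℝ :=
  ∑ t, (frobNorm (f t - A * b t * Bᵀ) ^ 2 + frobNorm (b t - A * f t * Bᵀ) ^ 2)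

/-- `P = Σ_t [(A b_t)ᵀ (A b_t) + (A f_t)ᵀ (A f_t)]`. -/
def burgP {m n N : ℕ} (A : Matrix (Fin m) (Fin m) ℝ)
    (f b : Fin N → Matrix (Fin m) (Fin n) ℝ) : Matrix (Fin n) (Fin n) ℝ :=
  ∑ t, ((A * b t)ᵀ * (A * b t) + (A * f t)ᵀ * (A * f t))

/-- `Q = Σ_t [b_tᵀ Aᵀ f_t + f_tᵀ Aᵀ b_t]`. -/
def burgQ {m n N : ℕ} (A : Matrix (Fin m) (Fin m) ℝ)
    (f b : Fin N → Matrix (Fin m) (Fin n) ℝ) : Matrix (Fin n) (Fin n) ℝ :=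
  ∑ t, ((b t)ᵀ * Aᵀ * f t + (f t)ᵀ * Aᵀ * b t)

lemma frob_sq {p q : ℕ} (M : Matrix (Fin p) (Fin q) ℝ) :
    frobNorm M ^ 2 = Matrix.trace (Mᵀ * M) := by
  rw [frobNorm, Real.sq_sqrt (by positivity)]
  simp [Matrix.trace, Matrix.mul_apply, Matrix.diag, pow_two]
  exact Finset.sum_comm

lemma trace_sq_nonneg {p q : ℕ} (M : Matrix (Fin p) (Fin q) ℝ) :
    0 ≤ Matrix.trace (Mᵀ * M) := by
  rw [← frob_sq]; positivity

lemma expand_lemma {m n : ℕ} (X Y : Matrix (Fin m) (Fin n) ℝ)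
    (S D : Matrix (Fin n) (Fin n) ℝ) :
    Matrix.trace ((X - Y*(S+D))ᵀ * (X - Y*(S+D))) =
      Matrix.trace ((X - Y*S)ᵀ * (X - Y*S)) + Matrix.trace ((Y*D)ᵀ*(Y*D))
        - 2 * Matrix.trace ((Xᵀ*Y - Sᵀ*(Yᵀ*Y)) * D) := by
  have key : ∀ (U V : Matrix (Fin m) (Fin n) ℝ),
      Matrix.trace (Uᵀ * V) = Matrix.trace (Vᵀ * U) := by
    intro U V
    rw [← Matrix.trace_transpose (Uᵀ * V), Matrix.transpose_mul, Matrix.transpose_transpose]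
  simp only [Matrix.mul_add, Matrix.transpose_sub, Matrix.transpose_mul, Matrix.sub_mul,
    Matrix.mul_sub, Matrix.add_mul, Matrix.transpose_add, Matrix.trace_sub, Matrix.trace_add,
    Matrix.transpose_transpose]
  have h1 : Matrix.trace ((Y * D)ᵀ * X) = Matrix.trace (Xᵀ * (Y * D)) := key _ _
  have h2 : Matrix.trace ((Y * D)ᵀ * (Y * S)) = Matrix.trace ((Y*S)ᵀ * (Y * D)) := key _ _
  simp only [Matrix.transpose_mul] at h1 h2
  have h3 : Matrix.trace (Xᵀ * Y * D) = Matrix.trace (Xᵀ * (Y * D)) := by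
    rw [Matrix.mul_assoc]
  have h4 : Matrix.trace (Sᵀ*(Yᵀ*Y)*D) = Matrix.trace (Sᵀ * Yᵀ * (Y * D)) := by
    rw [Matrix.mul_assoc, Matrix.mul_assoc, Matrix.mul_assoc]
  have h6 : Matrix.trace (Sᵀ * Yᵀ * X) = Matrix.trace (Xᵀ * (Y * S)) := by
    rw [← Matrix.transpose_mul]
    exact key _ _
  linarith

lemma main_ineq {m n N : ℕ} (A : Matrix (Fin m) (Fin m) ℝ)
    (f b : Fin N → Matrix (Fin m) (Fin n) ℝ) (Bstar : Matrix (Fin n) (Fin n) ℝ)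
    (hPQ : burgP A f b * Bstarᵀ = burgQ A f b) (B : Matrix (Fin n) (Fin n) ℝ) :
    burgE f b A Bstar ≤ burgE f b A B := by
  set S : Matrix (Fin n) (Fin n) ℝ := Bstarᵀ with hS
  set D : Matrix (Fin n) (Fin n) ℝ := Bᵀ - S with hD
  have hBD : S + D = Bᵀ := by rw [hD]; abel
  -- P is symmetric
  have hPsymm : (burgP A f b)ᵀ = burgP A f b := by
    rw [burgP, Matrix.transpose_sum]
    refine Finset.sum_congr rfl fun t _ => ?_
    simp [Matrix.transpose_add, Matrix.transpose_mul]
  -- cross coefficient per t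
  set c : Fin N → Matrix (Fin n) (Fin n) ℝ := fun t =>
    ((f t)ᵀ*(A*b t) - Sᵀ*((A*b t)ᵀ*(A*b t))) + ((b t)ᵀ*(A*f t) - Sᵀ*((A*f t)ᵀ*(A*f t)))
    with hc
  have hcsum : ∑ t, c t = (burgQ A f b)ᵀ - Sᵀ * burgP A f b := by
    rw [burgQ, burgP, Matrix.transpose_sum, Finset.mul_sum, ← Finset.sum_sub_distrib]
    refine Finset.sum_congr rfl fun t _ => ?_
    simp only [hc, Matrix.transpose_add, Matrix.transpose_mul, Matrix.transpose_transpose,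
      Matrix.mul_add, Matrix.mul_assoc]
    abel
  have hzero : ∑ t, c t = 0 := by
    rw [hcsum, ← hPQ, Matrix.transpose_mul, Matrix.transpose_transpose, hPsymm]
    exact sub_self _
  -- key decomposition
  have key : burgE f b A B = burgE f b A Bstar
      + ∑ t, (Matrix.trace ((A*b t*D)ᵀ*(A*b t*D)) + Matrix.trace ((A*f t*D)ᵀ*(A*f t*D))) := by
    rw [burgE, burgE]
    simp only [frob_sq]
    have ht : ∀ t : Fin N,
        Matrix.trace ((f t - A*b t*Bᵀ)ᵀ*(f t - A*b t*Bᵀ))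
          + Matrix.trace ((b t - A*f t*Bᵀ)ᵀ*(b t - A*f t*Bᵀ))
        = (Matrix.trace ((f t - A*b t*S)ᵀ*(f t - A*b t*S))
            + Matrix.trace ((b t - A*f t*S)ᵀ*(b t - A*f t*S)))
          + (Matrix.trace ((A*b t*D)ᵀ*(A*b t*D)) + Matrix.trace ((A*f t*D)ᵀ*(A*f t*D)))
          - 2 * Matrix.trace (c t * D) := by
      intro t
      have e1 := expand_lemma (f t) (A*b t) S D
      have e2 := expand_lemma (b t) (A*f t) S D
      rw [hBD] at e1 e2
      have hsplit : Matrix.trace (c t * D)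
          = Matrix.trace (((f t)ᵀ*(A*b t) - Sᵀ*((A*b t)ᵀ*(A*b t))) * D)
            + Matrix.trace (((b t)ᵀ*(A*f t) - Sᵀ*((A*f t)ᵀ*(A*f t))) * D) := by
        rw [hc]
        rw [Matrix.add_mul, Matrix.trace_add]
      linarith
    rw [Finset.sum_congr rfl (fun t _ => ht t), Finset.sum_sub_distrib,
      Finset.sum_add_distrib]
    have hc0 : ∑ t, 2 * Matrix.trace (c t * D) = 0 := by
      have : ∑ t, Matrix.trace (c t * D) = Matrix.trace ((∑ t, c t) * D) := by
        rw [Finset.sum_mul, Matrix.trace_sum]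
      rw [← Finset.mul_sum, this, hzero, Matrix.zero_mul, Matrix.trace_zero, mul_zero]
    rw [hc0]
    have hS' : ∀ t : Fin N,
        Matrix.trace ((f t - A*b t*S)ᵀ*(f t - A*b t*S))
          + Matrix.trace ((b t - A*f t*S)ᵀ*(b t - A*f t*S))
        = Matrix.trace ((f t - A*b t*Bstarᵀ)ᵀ*(f t - A*b t*Bstarᵀ))
          + Matrix.trace ((b t - A*f t*Bstarᵀ)ᵀ*(b t - A*f t*Bstarᵀ)) := fun t => rfl
    rw [Finset.sum_congr rfl (fun t _ => hS' t)]
    ring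
  rw [key]
  have : 0 ≤ ∑ t, (Matrix.trace ((A*b t*D)ᵀ*(A*b t*D)) + Matrix.trace ((A*f t*D)ᵀ*(A*f t*D))) :=
    Finset.sum_nonneg fun t _ => add_nonneg (trace_sq_nonneg _) (trace_sq_nonneg _)
  linarith


theorem stmt15 (m n N : ℕ) (hN : 1 ≤ N) (A : Matrix (Fin m) (Fin m) ℝ)
    (f b : Fin N → Matrix (Fin m) (Fin n) ℝ) :
    (∀ Bstar : Matrix (Fin n) (Fin n) ℝ,
      burgP A f b * Bstarᵀ = burgQ A f b →
        ∀ B : Matrix (Fin n) (Fin n) ℝ, burgE f b A Bstar ≤ burgE f b A B) ∧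
    (IsUnit (burgP A f b) →
      ∀ B : Matrix (Fin n) (Fin n) ℝ,
        burgE f b A (((burgP A f b)⁻¹ * burgQ A f b)ᵀ) ≤ burgE f b A B) := by
  constructor
  · intro Bstar h B
    exact main_ineq A f b Bstar h B
  · intro hP B
    apply main_ineq A f b _ _ B
    rw [Matrix.transpose_transpose, ← Matrix.mul_assoc,
      Matrix.mul_nonsing_inv _ ((Matrix.isUnit_iff_isUnit_det _).mp hP), Matrix.one_mul]
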